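/- Adler's map satisfies the parametric Yang–Baxter equation: for all parameters a, b, c ∈ ℂ and all (x,y,z) ∈ ℂ³ such that every denominator arising in both composite maps is nonzero, the two compositions Y¹²_{a,b} ∘ Y¹³_{a,c} ∘ Y²³_{b,c} and Y²³_{b,c} ∘ Y¹³_{a,c} ∘ Y¹²_{a,b} agree at (x,y,z). -/

import Mathlib

/-- First component of Adler's map: `u(x,y;a,b) = y + (a-b)/(x+y)`. -/
noncomputable def adlerU (a b x y : ℂ) : ℂ := y + (a - b) / (x + y)

/-- Second component of Adler's map: `v(x,y;a,b) = x - (a-b)/(x+y)`. -/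
noncomputable def adlerV (a b x y : ℂ) : ℂ := x - (a - b) / (x + y)

/-- Adler's map satisfies the parametric Yang–Baxter equation
`Y¹²_{a,b} ∘ Y¹³_{a,c} ∘ Y²³_{b,c} = Y²³_{b,c} ∘ Y¹³_{a,c} ∘ Y¹²_{a,b}`,
wherever all the denominators arising in both composite maps are nonzero. -/
theorem adler_yang_baxter (a b c x y z : ℂ)
    -- denominators in Y¹²_{a,b} ∘ Y¹³_{a,c} ∘ Y²³_{b,c} (applied right-to-left)
    (h1 : y + z ≠ 0)
    (h2 : x + adlerV b c y z ≠ 0)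
    (h3 : adlerU a c x (adlerV b c y z) + adlerU b c y z ≠ 0)
    -- denominators in Y²³_{b,c} ∘ Y¹³_{a,c} ∘ Y¹²_{a,b} (applied right-to-left)
    (h4 : x + y ≠ 0)
    (h5 : adlerU a b x y + z ≠ 0)
    (h6 : adlerV a b x y + adlerV a c (adlerU a b x y) z ≠ 0) :
    (adlerU a b (adlerU a c x (adlerV b c y z)) (adlerU b c y z),
     adlerV a b (adlerU a c x (adlerV b c y z)) (adlerU b c y z),
     adlerV a c x (adlerV b c y z))
    =
    (adlerU a c (adlerU a b x y) z,
     adlerU b c (adlerV a b x y) (adlerV a c (adlerU a b x y) z),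
     adlerV b c (adlerV a b x y) (adlerV a c (adlerU a b x y) z)) := by
  have hP : (x + y) * (y + z) - (b - c) ≠ 0 := by
    have h := mul_ne_zero h2 h1
    simp only [adlerV] at h
    intro hc; apply h
    field_simp
    linear_combination hc
  have hQ : (x + y) * (y + z) + (a - b) ≠ 0 := by
    have h := mul_ne_zero h5 h4
    simp only [adlerU] at h
    intro hc; apply h
    field_simp
    linear_combination hc
  have eA : x + adlerV b c y z = ((x + y) * (y + z) - (b - c)) / (y + z) := by
    simp only [adlerV]; field_simp; ring
  have eB : adlerU a c x (adlerV b c y z) + adlerU b c y z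
      = (y + z) * ((x + y) * (y + z) + (a - b)) / ((x + y) * (y + z) - (b - c)) := by
    simp only [adlerU]
    rw [eA]
    simp only [adlerV]
    have hP' : (y + z) * (x + y) - (b - c) ≠ 0 := by rw [mul_comm]; exact hP
    field_simp
    ring
  have eC : adlerU a b x y + z = ((x + y) * (y + z) + (a - b)) / (x + y) := by
    simp only [adlerU]; field_simp; ring
  have eD : adlerV a b x y + adlerV a c (adlerU a b x y) z
      = (x + y) * ((x + y) * (y + z) - (b - c)) / ((x + y) * (y + z) + (a - b)) := by
    simp only [adlerV]
    rw [eC]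
    simp only [adlerU]
    field_simp
    ring
  have L1 : adlerU a b (adlerU a c x (adlerV b c y z)) (adlerU b c y z)
      = adlerU b c y z + (a - b) / ((y + z) * ((x + y) * (y + z) + (a - b)) / ((x + y) * (y + z) - (b - c))) := by
    rw [adlerU, eB]
  have L2 : adlerV a b (adlerU a c x (adlerV b c y z)) (adlerU b c y z)
      = adlerU a c x (adlerV b c y z) - (a - b) / ((y + z) * ((x + y) * (y + z) + (a - b)) / ((x + y) * (y + z) - (b - c))) := by
    rw [adlerV, eB]
  have L3 : adlerV a c x (adlerV b c y z)
      = x - (a - c) / (((x + y) * (y + z) - (b - c)) / (y + z)) := by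
    rw [adlerV, eA]
  have R1 : adlerU a c (adlerU a b x y) z
      = z + (a - c) / (((x + y) * (y + z) + (a - b)) / (x + y)) := by
    rw [adlerU, eC]
  have R2 : adlerU b c (adlerV a b x y) (adlerV a c (adlerU a b x y) z)
      = adlerV a c (adlerU a b x y) z + (b - c) / ((x + y) * ((x + y) * (y + z) - (b - c)) / ((x + y) * (y + z) + (a - b))) := by
    rw [adlerU, eD]
  have R3 : adlerV b c (adlerV a b x y) (adlerV a c (adlerU a b x y) z)
      = adlerV a b x y - (b - c) / ((x + y) * ((x + y) * (y + z) - (b - c)) / ((x + y) * (y + z) + (a - b))) := by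
    rw [adlerV, eD]
  rw [L1, L2, L3, R1, R2, R3]
  have eV2 : adlerV a c (adlerU a b x y) z
      = adlerU a b x y - (a - c) / (((x + y) * (y + z) + (a - b)) / (x + y)) := by
    rw [adlerV, eC]
  have eU1 : adlerU a c x (adlerV b c y z)
      = adlerV b c y z + (a - c) / (((x + y) * (y + z) - (b - c)) / (y + z)) := by
    rw [adlerU, eA]
  rw [eV2, eU1]
  simp only [adlerU, adlerV]
  have hP' : (y + z) * (x + y) - (b - c) ≠ 0 := by rw [mul_comm]; exact hP
  have hQ' : (y + z) * (x + y) + (a - b) ≠ 0 := by rw [mul_comm]; exact hQ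
  refine Prod.ext ?_ (Prod.ext ?_ ?_) <;> field_simp <;> ring
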